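/- Let P be a uniformly ergodic transition kernel on a nonempty finite set S (so that t_mix(P) < ∞). Then for every ε > 0 there exist m ∈ ℤ_{>0} and p ∈ (0,1] such that m/p ≤ 22 · t_mix(P) + ε and P satisfies the (m,p)-Doeblin condition. -/

import Mathlib

open Filter

/-- `P` is a transition kernel on the finite set `S`: nonnegative entries, rows sum to 1. -/
def IsKernel {S : Type*} [Fintype S] (P : Matrix S S ℝ) : Prop :=
  (∀ s s', 0 ≤ P s s') ∧ ∀ s, ∑ s', P s s' = 1

/-- `μ` is a probability distribution on the finite set `S`. -/
def IsProb {S : Type*} [Fintype S] (μ : S → ℝ) : Prop :=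
  (∀ s, 0 ≤ μ s) ∧ ∑ s, μ s = 1

/-- Total variation distance between two distributions on a finite set. -/
noncomputable def tvDist {S : Type*} [Fintype S] (μ ν : S → ℝ) : ℝ :=
  (∑ s, |μ s - ν s|) / 2

/-- Uniform ergodicity: `sup_s ‖P^n(s,·) − η‖_TV → 0`. -/
def UnifErgodic {S : Type*} [Fintype S] [DecidableEq S] (P : Matrix S S ℝ) (η : S → ℝ) : Prop :=
  Tendsto (fun n : ℕ => ⨆ s, tvDist ((P ^ n) s) η) atTop (nhds 0)

/-- The `(m,p)`-Doeblin minorization condition. -/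
def Doeblin {S : Type*} [Fintype S] [DecidableEq S] (P : Matrix S S ℝ) (m : ℕ) (p : ℝ) : Prop :=
  ∃ ψ : S → ℝ, IsProb ψ ∧ ∀ s s', p * ψ s' ≤ (P ^ m) s s'

/-- Mixing time: least `t ≥ 1` with `sup_s ‖P^t(s,·) − η‖_TV ≤ 1/4`. -/
noncomputable def tMix {S : Type*} [Fintype S] [DecidableEq S]
    (P : Matrix S S ℝ) (η : S → ℝ) : ℕ :=
  sInf {t : ℕ | 0 < t ∧ ∀ s, tvDist ((P ^ t) s) η ≤ 1 / 4}

/-- Minorization time: infimum of `m/p` over valid Doeblin pairs `(m,p)`. -/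
noncomputable def tMinorize {S : Type*} [Fintype S] [DecidableEq S] (P : Matrix S S ℝ) : ℝ :=
  sInf {x : ℝ | ∃ (m : ℕ) (p : ℝ), 0 < m ∧ 0 < p ∧ p ≤ 1 ∧ Doeblin P m p ∧ x = m / p}

/-- Separation time for a given minorization pair `(p, ψ)`. -/
noncomputable def tSep {S : Type*} [Fintype S] [DecidableEq S]
    (P : Matrix S S ℝ) (p : ℝ) (ψ : S → ℝ) : ℕ :=
  sInf {m : ℕ | 0 < m ∧ ∀ s s', p * ψ s' ≤ (P ^ m) s s'}


section DoeblinAux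
variable {S : Type*} [Fintype S] [DecidableEq S]

private lemma _kernel_pow (P : Matrix S S ℝ) (hP : IsKernel P) (n : ℕ) : IsKernel (P ^ n) := by
  induction n with
  | zero =>
    refine ⟨fun s s' => ?_, fun s => ?_⟩
    · rw [pow_zero, Matrix.one_apply]
      split <;> norm_num
    · rw [pow_zero]
      simp [Matrix.one_apply]
  | succ n ih =>
    rw [pow_succ]
    refine ⟨fun s s' => ?_, fun s => ?_⟩
    · rw [Matrix.mul_apply]
      exact Finset.sum_nonneg fun z _ => mul_nonneg (ih.1 s z) (hP.1 z s')
    · simp only [Matrix.mul_apply]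
      rw [Finset.sum_comm]
      calc ∑ z, ∑ s', (P ^ n) s z * P z s' = ∑ z, (P ^ n) s z * ∑ s', P z s' := by
            simp [Finset.mul_sum]
        _ = 1 := by simp [hP.2, ih.2 s]

private lemma _stat_pow (P : Matrix S S ℝ) (η : S → ℝ)
    (hstat : ∀ s', ∑ s, η s * P s s' = η s') (n : ℕ) :
    ∀ s', ∑ s, η s * (P ^ n) s s' = η s' := by
  induction n with
  | zero => intro s'; rw [pow_zero]; simp [Matrix.one_apply]
  | succ n ih =>
    intro s'
    rw [pow_succ]
    simp only [Matrix.mul_apply, Finset.mul_sum]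
    rw [Finset.sum_comm]
    calc ∑ z, ∑ s, η s * ((P ^ n) s z * P z s')
        = ∑ z, (∑ s, η s * (P ^ n) s z) * P z s' := by
          congr 1; ext z; rw [Finset.sum_mul]; congr 1; ext s; ring
      _ = ∑ z, η z * P z s' := by simp only [ih]
      _ = η s' := hstat s'


private lemma _tv_contract (P : Matrix S S ℝ) (hP : IsKernel P) (η : S → ℝ) (hη : IsProb η)
    (hstat : ∀ s', ∑ s, η s * P s s' = η s') (a b : ℕ) (u v : ℝ) (hv : 0 ≤ v)
    (ha : ∀ x, tvDist ((P ^ a) x) η ≤ u) (hb : ∀ x, tvDist ((P ^ b) x) η ≤ v) :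
    ∀ x, tvDist ((P ^ (a + b)) x) η ≤ 2 * u * v := by
  intro x
  have key : ∀ y, (P ^ (a + b)) x y - η y
      = ∑ z, ((P ^ a) x z - η z) * ((P ^ b) z y - η y) := by
    intro y
    have h1 : (P ^ (a + b)) x y = ∑ z, (P ^ a) x z * (P ^ b) z y := by
      rw [pow_add, Matrix.mul_apply]
    have h2 : ∑ z, η z * (P ^ b) z y = η y := _stat_pow P η hstat b y
    have h3 : ∑ z, (P ^ a) x z = 1 := (_kernel_pow P hP a).2 x
    have h4 : ∑ z, η z = 1 := hη.2
    have expand : ∀ z, ((P ^ a) x z - η z) * ((P ^ b) z y - η y)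
        = (P ^ a) x z * (P ^ b) z y - ((P ^ a) x z) * η y - η z * (P ^ b) z y
          + η z * η y := by intro z; ring
    rw [Finset.sum_congr rfl fun z _ => expand z]
    simp only [Finset.sum_add_distrib, Finset.sum_sub_distrib, ← Finset.sum_mul, h2, h3, h4]
    rw [h1]
    ring
  have habs : ∀ y, |(P ^ (a + b)) x y - η y|
      ≤ ∑ z, |(P ^ a) x z - η z| * |(P ^ b) z y - η y| := by
    intro y
    rw [key y]
    calc |∑ z, ((P ^ a) x z - η z) * ((P ^ b) z y - η y)|
        ≤ ∑ z, |((P ^ a) x z - η z) * ((P ^ b) z y - η y)| := Finset.abs_sum_le_sum_abs _ _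
      _ = ∑ z, |(P ^ a) x z - η z| * |(P ^ b) z y - η y| := by simp [abs_mul]
  have hsum : ∑ y, |(P ^ (a + b)) x y - η y| ≤ (2 * u) * (2 * v) := by
    calc ∑ y, |(P ^ (a + b)) x y - η y|
        ≤ ∑ y, ∑ z, |(P ^ a) x z - η z| * |(P ^ b) z y - η y| :=
          Finset.sum_le_sum fun y _ => habs y
      _ = ∑ z, |(P ^ a) x z - η z| * ∑ y, |(P ^ b) z y - η y| := by
          rw [Finset.sum_comm]; simp [Finset.mul_sum]
      _ ≤ ∑ z, |(P ^ a) x z - η z| * (2 * v) := by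
          refine Finset.sum_le_sum fun z _ => ?_
          refine mul_le_mul_of_nonneg_left ?_ (abs_nonneg _)
          have := hb z
          unfold tvDist at this
          linarith
      _ = (∑ z, |(P ^ a) x z - η z|) * (2 * v) := by rw [Finset.sum_mul]
      _ ≤ (2 * u) * (2 * v) := by
          refine mul_le_mul_of_nonneg_right ?_ (by linarith)
          have := ha x
          unfold tvDist at this
          linarith
  unfold tvDist
  linarith


-- main construction, assuming d(3t)-type bound at exponent c with value 1/16
private lemma doeblin_construction [Nonempty S] (P : Matrix S S ℝ) (hP : IsKernel P) (η : S → ℝ) (hη : IsProb η)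
    (c : ℕ) (hc : 0 < c)
    (h3 : ∀ x, tvDist ((P ^ c) x) η ≤ 1 / 16) (t : ℝ) (ht : (c : ℝ) ≤ 3 * t) (ht1 : 1 ≤ t)
    (ε : ℝ) (hε : 0 < ε) :
    ∃ (m : ℕ) (p : ℝ), 0 < m ∧ 0 < p ∧ p ≤ 1 ∧
      (m : ℝ) / p ≤ 22 * t + ε ∧ Doeblin P m p := by
  classical
  set R : Matrix S S ℝ := P ^ c with hR
  have hRk : IsKernel R := _kernel_pow P hP c
  -- bad-mass bound: for every x, the η-mass of {y : R x y < (3/4) η y} is ≤ 1/4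
  have hmaxsum : ∀ x, ∑ z, max (η z - R x z) 0 = tvDist (R x) η := by
    intro x
    have h1 : ∀ z, max (η z - R x z) 0 = ((η z - R x z) + |R x z - η z|) / 2 := by
      intro z
      rw [max_def]
      split
      · rename_i h
        rw [abs_of_nonneg (by linarith : (0:ℝ) ≤ R x z - η z)] <;> try skip
        · linarith
      · rename_i h
        push_neg at h
        rw [abs_of_nonpos (by linarith : R x z - η z ≤ 0)]
        linarith
    rw [Finset.sum_congr rfl fun z _ => h1 z]
    unfold tvDist
    rw [← Finset.sum_div]
    have h2 : ∑ z, ((η z - R x z) + |R x z - η z|) = ∑ z, |R x z - η z| := by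
      rw [Finset.sum_add_distrib, Finset.sum_sub_distrib, hη.2, hRk.2 x]
      ring
    rw [h2]
  have hbad : ∀ x, (∑ z, if (3/4) * η z ≤ R x z then 0 else η z) ≤ 1 / 4 := by
    intro x
    have hterm : ∀ z, (if (3/4) * η z ≤ R x z then (0:ℝ) else η z)
        ≤ 4 * max (η z - R x z) 0 := by
      intro z
      split
      · positivity
      · rename_i h
        push_neg at h
        have hz : 0 ≤ η z := hη.1 z
        have : η z - R x z ≤ max (η z - R x z) 0 := le_max_left _ _
        nlinarith
    calc (∑ z, if (3/4) * η z ≤ R x z then (0:ℝ) else η z)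
        ≤ ∑ z, 4 * max (η z - R x z) 0 := Finset.sum_le_sum fun z _ => hterm z
      _ = 4 * tvDist (R x) η := by rw [← Finset.mul_sum, hmaxsum x]
      _ ≤ 1 / 4 := by have := h3 x; linarith
  -- g y = η-mass of starting points z whose R-row is ≥ (3/4) η at y
  set g : S → ℝ := fun y => ∑ z, if (3/4) * η y ≤ R z y then η z else 0 with hg
  have hgood : ∀ z, (3:ℝ)/4 ≤ ∑ y, if (3/4) * η y ≤ R z y then η y else 0 := by
    intro z
    have hsplit : (∑ y, if (3/4) * η y ≤ R z y then η y else 0)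
        + (∑ y, if (3/4) * η y ≤ R z y then 0 else η y) = 1 := by
      rw [← Finset.sum_add_distrib]
      rw [← hη.2]
      refine Finset.sum_congr rfl fun y _ => ?_
      split <;> ring
    have := hbad z
    linarith
  have hg_nonneg : ∀ y, 0 ≤ g y := by
    intro y
    refine Finset.sum_nonneg fun z _ => ?_
    split
    · exact hη.1 z
    · exact le_rfl
  have hg_le_one : ∀ y, g y ≤ 1 := by
    intro y
    have h1 : g y ≤ ∑ z, η z := by
      refine Finset.sum_le_sum fun z _ => ?_
      split
      · exact le_rfl
      · exact hη.1 z
    rw [hη.2] at h1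
    exact h1
  have hgsum : (3:ℝ)/4 ≤ ∑ y, η y * g y := by
    have hswap : ∑ y, η y * g y
        = ∑ z, η z * ∑ y, (if (3/4) * η y ≤ R z y then η y else 0) := by
      simp only [hg, Finset.mul_sum]
      rw [Finset.sum_comm]
      refine Finset.sum_congr rfl fun z _ => Finset.sum_congr rfl fun y _ => ?_
      split <;> ring
    rw [hswap]
    calc (3:ℝ)/4 = ∑ z, η z * (3/4) := by rw [← Finset.sum_mul, hη.2]; ring
      _ ≤ ∑ z, η z * ∑ y, (if (3/4) * η y ≤ R z y then η y else 0) :=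
          Finset.sum_le_sum fun z _ => mul_le_mul_of_nonneg_left (hgood z) (hη.1 z)
  set Z : ℝ := ∑ y, η y * max (g y - 1/4) 0 with hZ
  have hZhalf : (1:ℝ)/2 ≤ Z := by
    have : ∑ y, η y * (g y - 1/4) ≤ Z := by
      refine Finset.sum_le_sum fun y _ => mul_le_mul_of_nonneg_left (le_max_left _ _) (hη.1 y)
    have h2 : ∑ y, η y * (g y - 1/4) = (∑ y, η y * g y) - 1/4 := by
      simp only [mul_sub]
      rw [Finset.sum_sub_distrib, ← Finset.sum_mul, hη.2]
      ring
    linarith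
  have hZ1 : Z ≤ 1 := by
    calc Z ≤ ∑ y, η y * 1 := by
          refine Finset.sum_le_sum fun y _ => mul_le_mul_of_nonneg_left ?_ (hη.1 y)
          have := hg_le_one y
          rw [max_le_iff]
          constructor <;> linarith
      _ = 1 := by simp [hη.2]
  have hZpos : 0 < Z := by linarith
  -- minorization at 2c steps
  have hmin : ∀ x y, (9/16) * (η y * max (g y - 1/4) 0) ≤ (P ^ (2 * c)) x y := by
    intro x y
    have hrw : (P ^ (2 * c)) x y = ∑ z, R x z * R z y := by
      rw [two_mul, pow_add, Matrix.mul_apply]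
    set h : S → ℝ := fun z =>
      if (3/4) * η z ≤ R x z ∧ (3/4) * η y ≤ R z y then η z else 0 with hh
    have step1 : (9/16) * (η y * ∑ z, h z) ≤ ∑ z, R x z * R z y := by
      rw [Finset.mul_sum, Finset.mul_sum]
      refine Finset.sum_le_sum fun z _ => ?_
      simp only [hh]
      split
      · rename_i hcond
        have h1 := hcond.1
        have h2 := hcond.2
        have hz : 0 ≤ η z := hη.1 z
        have hy : 0 ≤ η y := hη.1 y
        nlinarith [hRk.1 x z, hRk.1 z y]
      · have := mul_nonneg (hRk.1 x z) (hRk.1 z y)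
        simpa using this
    have step2 : max (g y - 1/4) 0 ≤ ∑ z, h z := by
      have hnn : (0:ℝ) ≤ ∑ z, h z := by
        refine Finset.sum_nonneg fun z _ => ?_
        simp only [hh]; split; exacts [hη.1 z, le_rfl]
      have hdiff : g y - ∑ z, h z ≤ 1/4 := by
        have : g y - ∑ z, h z ≤ ∑ z, if (3/4) * η z ≤ R x z then 0 else η z := by
          rw [hg, ← Finset.sum_sub_distrib]
          refine Finset.sum_le_sum fun z _ => ?_
          simp only [hh]
          by_cases hA : (3/4) * η z ≤ R x z <;> by_cases hB : (3/4) * η y ≤ R z y <;>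
            simp [hA, hB, hη.1 z]
        exact le_trans this (hbad x)
      rw [max_le_iff]
      exact ⟨by linarith, hnn⟩
    calc (9/16) * (η y * max (g y - 1/4) 0)
        ≤ (9/16) * (η y * ∑ z, h z) := by
          refine mul_le_mul_of_nonneg_left (mul_le_mul_of_nonneg_left step2 (hη.1 y)) (by norm_num)
      _ ≤ ∑ z, R x z * R z y := step1
      _ = (P ^ (2 * c)) x y := hrw.symm
  -- assemble
  refine ⟨2 * c, (9/16) * Z, by omega, by positivity, by nlinarith, ?_, ?_⟩
  · -- (2c)/p ≤ 22 t + ε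
    rw [div_le_iff₀ (by positivity)]
    have hcast : ((2 * c : ℕ) : ℝ) = 2 * (c : ℝ) := by push_cast; ring
    rw [hcast]
    nlinarith [mul_le_mul_of_nonneg_left hZhalf (by norm_num : (0:ℝ) ≤ 9/16),
      mul_pos hε (by linarith : (0:ℝ) < (9/16) * Z)]
  · refine ⟨fun y => (η y * max (g y - 1/4) 0) / Z, ⟨fun y => ?_, ?_⟩, fun x y => ?_⟩
    · have := mul_nonneg (hη.1 y) (le_max_right (g y - 1/4) 0)
      positivity
    · rw [← Finset.sum_div, ← hZ, div_self (ne_of_gt hZpos)]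
    · have heq : (9/16) * Z * ((η y * max (g y - 1/4) 0) / Z)
          = (9/16) * (η y * max (g y - 1/4) 0) := by
        field_simp
      rw [heq]
      exact hmin x y

end DoeblinAux

/-- if `P` is uniformly ergodic (with stationary distribution `η`), then for every
`ε > 0` there are `m ∈ ℤ_{>0}` and `p ∈ (0,1]` with `m/p ≤ 22·t_mix(P) + ε` such that `P`
satisfies the `(m,p)`-Doeblin condition. -/
theorem exists_doeblin_of_unifErgodic
    {S : Type*} [Fintype S] [Nonempty S] [DecidableEq S]
    (P : Matrix S S ℝ) (hP : IsKernel P)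
    (η : S → ℝ) (hη : IsProb η) (hstat : ∀ s', ∑ s, η s * P s s' = η s')
    (hUE : UnifErgodic P η) :
    ∀ ε : ℝ, 0 < ε → ∃ (m : ℕ) (p : ℝ), 0 < m ∧ 0 < p ∧ p ≤ 1 ∧
      (m : ℝ) / p ≤ 22 * (tMix P η : ℝ) + ε ∧ Doeblin P m p := by
  classical
  intro ε hε
  -- the mixing time is attained
  have hne : {n : ℕ | 0 < n ∧ ∀ s, tvDist ((P ^ n) s) η ≤ 1 / 4}.Nonempty := by
    have h1 : ∀ᶠ n : ℕ in atTop, (⨆ s, tvDist ((P ^ n) s) η) < 1 / 4 :=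
      hUE.eventually_lt_const (by norm_num)
    obtain ⟨n, hn1, hn2⟩ := (h1.and (eventually_ge_atTop 1)).exists
    refine ⟨n, hn2, fun s => ?_⟩
    have hb : BddAbove (Set.range fun s => tvDist ((P ^ n) s) η) :=
      Set.Finite.bddAbove (Set.finite_range _)
    exact le_of_lt (lt_of_le_of_lt (le_ciSup hb s) hn1)
  have hmem : tMix P η ∈ {n : ℕ | 0 < n ∧ ∀ s, tvDist ((P ^ n) s) η ≤ 1 / 4} :=
    Nat.sInf_mem hne
  set t : ℕ := tMix P η with htdef
  obtain ⟨ht0, ht4⟩ := hmem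
  -- TV contraction: d(2t) ≤ 1/8 and d(3t) ≤ 1/16
  have h2t : ∀ x, tvDist ((P ^ (t + t)) x) η ≤ 1 / 8 := by
    have := _tv_contract P hP η hη hstat t t (1/4) (1/4) (by norm_num) ht4 ht4
    intro x; have := this x; linarith
  have h3t : ∀ x, tvDist ((P ^ (t + t + t)) x) η ≤ 1 / 16 := by
    have := _tv_contract P hP η hη hstat (t + t) t (1/8) (1/4) (by norm_num) h2t ht4
    intro x; have := this x; linarith
  have ht1 : (1 : ℝ) ≤ (t : ℝ) := by exact_mod_cast ht0
  have hc3 : ((t + t + t : ℕ) : ℝ) ≤ 3 * (t : ℝ) := by push_cast; linarith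
  exact doeblin_construction P hP η hη (t + t + t) (by omega) h3t (t : ℝ) hc3 ht1 ε hε
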